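/- For all m, n >= 0, the number of involutions satisfies the convolution identity cd(m+n) = sum over k >= 0 of k! * C(m,k) * C(n,k) * cd(m-k) * cd(n-k). -/

import Mathlib

/-- `cd n` is the number of involutions in the symmetric group on `n` letters (OEIS A000085). -/
noncomputable def cd (n : ℕ) : ℕ :=
  Nat.card {g : Equiv.Perm (Fin n) // g ^ 2 = 1}

open Equiv Equiv.Perm


lemma inv_card_congr {α β : Type*} (e : α ≃ β) :
    Nat.card {g : Perm α // g ^ 2 = 1} = Nat.card {g : Perm β // g ^ 2 = 1} := by
  refine Nat.card_congr (Equiv.subtypeEquiv (e.permCongr) fun g => ?_)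
  have h1 : (e.permCongr g) ^ 2 = e.permCongr (g ^ 2) := by
    ext x; simp [pow_two, Equiv.permCongr_apply, Equiv.Perm.mul_apply]
  rw [h1]
  have h2 : e.permCongr (1 : Perm α) = 1 := by ext x; simp
  exact ⟨fun h => by rw [h, h2], fun h => e.permCongr.injective (by rw [h, h2])⟩

lemma cd_card (α : Type*) [Fintype α] :
    Nat.card {g : Perm α // g ^ 2 = 1} = cd (Fintype.card α) :=
  inv_card_congr (Fintype.equivFin α)

section main
variable {α : Type*} [DecidableEq α] [Fintype α]

omit [DecidableEq α] [Fintype α] in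
lemma sq_apply_eq {g : Perm α} (hg : g ^ 2 = 1) (z : α) : g (g z) = z := by
  have := congrArg (fun p : Perm α => p z) hg
  simpa [pow_two, Equiv.Perm.mul_apply] using this

omit [DecidableEq α] [Fintype α] in
lemma apply_eq_iff_sq {g : Perm α} (hg : g ^ 2 = 1) (z w : α) : g z = w ↔ z = g w :=
  ⟨fun h => by rw [← h, sq_apply_eq hg], fun h => by rw [h, sq_apply_eq hg]⟩

def fixEquiv (x : α) :
    {g : Perm α // g ^ 2 = 1 ∧ g x = x} ≃ {g : Perm {y : α // y ≠ x} // g ^ 2 = 1} where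
  toFun := fun ⟨g, hg, hx⟩ => ⟨g.subtypePerm (fun y => not_congr (by
      rw [apply_eq_iff_sq hg, hx])), by
    ext z
    simp [pow_two, Equiv.Perm.mul_apply, Equiv.Perm.subtypePerm_apply, sq_apply_eq hg]⟩
  invFun := fun ⟨h, hh⟩ => ⟨ofSubtype h, by
    rw [← map_pow, hh, map_one],
    Equiv.Perm.ofSubtype_apply_of_not_mem (p := fun y => y ≠ x) h (by simp)⟩
  left_inv := fun ⟨g, hg, hx⟩ => by
    ext z
    by_cases hz : z = x
    · rw [hz, Equiv.Perm.ofSubtype_apply_of_not_mem (p := fun y => y ≠ x) _ (by simp), hx]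
    · rw [Equiv.Perm.ofSubtype_apply_of_mem (p := fun y => y ≠ x) _ hz]
      rfl
  right_inv := fun ⟨h, hh⟩ => by
    ext z
    simp only [Equiv.Perm.subtypePerm_apply]
    exact Equiv.Perm.ofSubtype_apply_of_mem (p := fun y => y ≠ x) h z.2

def swapEquiv (x y : α) (hxy : y ≠ x) :
    {g : Perm α // g ^ 2 = 1 ∧ g x = y} ≃
      {g : Perm {z : α // z ≠ x ∧ z ≠ y} // g ^ 2 = 1} where
  toFun := fun ⟨g, hg, hx⟩ => ⟨g.subtypePerm (fun z => by
      have hgy : g y = x := by rw [← hx, sq_apply_eq hg]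
      have h1 : g z = x ↔ z = y := by rw [apply_eq_iff_sq hg, hx]
      have h2 : g z = y ↔ z = x := by rw [← hx]; exact EmbeddingLike.apply_eq_iff_eq g
      constructor
      · rintro ⟨hzx, hzy⟩
        exact ⟨fun hc => hzy (by rw [hc, hx]), fun hc => hzx (by rw [hc, hgy])⟩
      · rintro ⟨hzx, hzy⟩
        exact ⟨fun hc => hzy (h1.mp hc), fun hc => hzx (h2.mp hc)⟩), by
    ext z
    simp [pow_two, Equiv.Perm.mul_apply, Equiv.Perm.subtypePerm_apply, sq_apply_eq hg]⟩
  invFun := fun ⟨h, hh⟩ => ⟨Equiv.swap x y * ofSubtype h, by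
      have hd : (Equiv.swap x y).Disjoint (ofSubtype h) := by
        intro z
        by_cases hz : z ≠ x ∧ z ≠ y
        · exact Or.inl (Equiv.swap_apply_of_ne_of_ne hz.1 hz.2)
        · exact Or.inr
            (Equiv.Perm.ofSubtype_apply_of_not_mem (p := fun z => z ≠ x ∧ z ≠ y) h hz)
      rw [hd.commute.mul_pow, ← map_pow, hh, map_one, mul_one]
      ext z; simp [pow_two, Equiv.Perm.mul_apply], by
    rw [Equiv.Perm.mul_apply,
      Equiv.Perm.ofSubtype_apply_of_not_mem (p := fun z => z ≠ x ∧ z ≠ y) h (by simp),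
      Equiv.swap_apply_left]⟩
  left_inv := fun ⟨g, hg, hx⟩ => by
    have hgy : g y = x := by rw [← hx, sq_apply_eq hg]
    ext z
    rw [Equiv.Perm.mul_apply]
    by_cases hzx : z = x
    · rw [hzx,
        Equiv.Perm.ofSubtype_apply_of_not_mem (p := fun z => z ≠ x ∧ z ≠ y) _ (by simp),
        Equiv.swap_apply_left]
      exact hx.symm
    · by_cases hzy : z = y
      · rw [hzy,
          Equiv.Perm.ofSubtype_apply_of_not_mem (p := fun z => z ≠ x ∧ z ≠ y) _ (by simp),
          Equiv.swap_apply_right]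
        exact hgy.symm
      · rw [Equiv.Perm.ofSubtype_apply_of_mem (p := fun z => z ≠ x ∧ z ≠ y) _ ⟨hzx, hzy⟩]
        have h1 : g z ≠ x := fun h => hzy (by rw [apply_eq_iff_sq hg, hx] at h; exact h)
        have h2 : g z ≠ y := fun h => hzx (g.injective (h.trans hx.symm))
        exact Equiv.swap_apply_of_ne_of_ne h1 h2
  right_inv := fun ⟨h, hh⟩ => by
    ext z
    simp only [Equiv.Perm.subtypePerm_apply]
    rw [Equiv.Perm.mul_apply,
      Equiv.Perm.ofSubtype_apply_of_mem (p := fun z => z ≠ x ∧ z ≠ y) h z.2]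
    exact Equiv.swap_apply_of_ne_of_ne (h z).2.1 (h z).2.2


lemma card_ne_ne (x y : α) (h : y ≠ x) :
    Fintype.card {z : α // z ≠ x ∧ z ≠ y} = Fintype.card α - 2 := by
  rw [Fintype.card_subtype]
  have he : Finset.univ.filter (fun z => z ≠ x ∧ z ≠ y) = Finset.univ \ {x, y} := by
    ext z; simp [not_or]
  rw [he, Finset.card_sdiff_of_subset (by simp), Finset.card_univ, Finset.card_pair (Ne.symm h)]

lemma card_inv_eq (x : α) :
    Nat.card {g : Perm α // g ^ 2 = 1} =
      cd (Fintype.card α - 1) + (Fintype.card α - 1) * cd (Fintype.card α - 2) := by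
  classical
  have h1 : Nat.card {g : Perm α // g ^ 2 = 1}
      = ∑ y : α, Nat.card {g : Perm α // g ^ 2 = 1 ∧ g x = y} := by
    rw [Nat.card_congr
      (Equiv.sigmaFiberEquiv (fun g : {g : Perm α // g ^ 2 = 1} => g.1 x)).symm,
      Nat.card_eq_fintype_card, Fintype.card_sigma]
    refine Finset.sum_congr rfl fun y _ => ?_
    rw [← Nat.card_eq_fintype_card]
    exact Nat.card_congr (Equiv.subtypeSubtypeEquivSubtypeInter
      (fun g : Perm α => g ^ 2 = 1) (fun g => g x = y))
  rw [h1, ← Finset.add_sum_erase _ _ (Finset.mem_univ x)]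
  congr 1
  · rw [Nat.card_congr (fixEquiv x), cd_card]
    congr 1
    simp [Fintype.card_subtype_compl]
  · have hterm : ∀ y ∈ Finset.univ.erase x,
        Nat.card {g : Perm α // g ^ 2 = 1 ∧ g x = y} = cd (Fintype.card α - 2) := by
      intro y hy
      have hyx : y ≠ x := Finset.ne_of_mem_erase hy
      rw [Nat.card_congr (swapEquiv x y hyx), cd_card, card_ne_ne x y hyx]
    rw [Finset.sum_congr rfl hterm, Finset.sum_const, Finset.card_erase_of_mem
      (Finset.mem_univ x), Finset.card_univ, smul_eq_mul]

lemma cd_rec (n : ℕ) : cd (n + 2) = cd (n + 1) + (n + 1) * cd n := by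
  have h := card_inv_eq (α := Fin (n + 2)) 0
  rw [Fintype.card_fin] at h
  rw [show cd (n + 2) = Nat.card {g : Perm (Fin (n + 2)) // g ^ 2 = 1} from rfl, h]
  norm_num
end main

lemma cd_zero : cd 0 = 1 := by
  rw [cd, Nat.card_eq_fintype_card]; decide

lemma cd_one : cd 1 = 1 := by
  rw [cd, Nat.card_eq_fintype_card]; decide

lemma cd_star (a : ℕ) : cd a = cd (a - 1) + (a - 1) * cd (a - 2) := by
  match a with
  | 0 => simp
  | 1 => simp [cd_one, cd_zero]
  | (n+2) => simpa using cd_rec n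

noncomputable def tt (m n k : ℕ) : ℕ :=
  k.factorial * Nat.choose m k * Nat.choose n k * cd (m - k) * cd (n - k)

noncomputable def PP (m n k : ℕ) : ℕ :=
  (k+1).factorial * Nat.choose m k * Nat.choose n (k+1) * cd (m - k) * cd (n - (k+1))

noncomputable def QQ (m n k : ℕ) : ℕ :=
  (k+1).factorial * Nat.choose m (k+1) * Nat.choose n (k+1) * cd (m - (k+1)) * cd (n - (k+1))

lemma tt_symm (m n k : ℕ) : tt m n k = tt n m k := by unfold tt; ring

lemma QQ_symm (m n k : ℕ) : QQ m n k = QQ n m k := by unfold QQ; ring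

lemma tt_zero (m n : ℕ) : tt (m+1) n 0 = cd m * cd n + PP n m 0 := by
  unfold tt PP
  have h : cd (m + 1) = cd m + m * cd (m - 1) := by
    have := cd_star (m + 1); simpa using this
  simp [h, Nat.choose_one_right]
  ring

lemma tt_split (m n k : ℕ) :
    tt (m+1) n (k+1) = PP m n k + QQ m n k + PP n m (k+1) := by
  unfold tt PP QQ
  rw [Nat.succ_sub_succ, Nat.choose_succ_succ]
  have e1 : m - (k+1) = m - k - 1 := (Nat.sub_sub m k 1)
  have e2 : m - (k+2) = m - k - 2 := (Nat.sub_sub m k 2)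
  have hcd : cd (m - k) = cd (m - k - 1) + (m - k - 1) * cd (m - k - 2) := cd_star (m - k)
  have hc : Nat.choose m (k+2) * (k+2) = Nat.choose m (k+1) * (m - (k+1)) :=
    Nat.choose_succ_right_eq m (k+1)
  have hr : m - k - 1 = m - (k + 1) := (Nat.sub_sub m k 1).symm
  rw [hcd, e1, e2, hr, Nat.factorial_succ (k+1)]
  set F := (k+1).factorial with hF
  set a := Nat.choose m k with ha
  set b := Nat.choose m (k+1) with hb
  set c := Nat.choose m (k+2) with hc2
  set d := Nat.choose n (k+1) with hd
  set u := cd (m - (k+1)) with hu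
  set v := cd (m - k - 2) with hv
  set w := cd (n - (k+1)) with hw
  set r := m - (k+1) with hrr
  clear_value F a b c d u v w r
  zify at hc ⊢
  linear_combination (-(F * d * v * w) : ℤ) * hc

lemma PP_top (M N B : ℕ) (h : M ≤ B) : PP N M B = 0 := by
  unfold PP
  rw [Nat.choose_eq_zero_of_lt (by omega : M < B + 1)]
  ring

lemma sum_split (M N B : ℕ) (h : M ≤ B) :
    ∑ k ∈ Finset.range (B+1), tt (M+1) N k
      = ∑ k ∈ Finset.range B, PP M N k + ∑ k ∈ Finset.range B, QQ M N k
        + ∑ k ∈ Finset.range B, PP N M k + cd M * cd N := by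
  rw [Finset.sum_range_succ' (fun k => tt (M+1) N k) B]
  rw [Finset.sum_congr rfl (fun k _ => tt_split M N k), Finset.sum_add_distrib,
    Finset.sum_add_distrib, tt_zero]
  have h2 : ∑ k ∈ Finset.range B, PP N M (k+1) + PP N M 0
      = ∑ k ∈ Finset.range (B+1), PP N M k := (Finset.sum_range_succ' _ B).symm
  have h3 : ∑ k ∈ Finset.range (B+1), PP N M k
      = ∑ k ∈ Finset.range B, PP N M k + PP N M B := Finset.sum_range_succ _ B
  rw [PP_top M N B h] at h3
  omega

lemma key (m n : ℕ) :
    ∑ k ∈ Finset.range ((m+n+1)+1), tt (m+1) n k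
      = ∑ k ∈ Finset.range ((m+n+1)+1), tt m (n+1) k := by
  have h1 := sum_split m n (m+n+1) (by omega)
  have h2 := sum_split n m (m+n+1) (by omega)
  have e1 : ∑ k ∈ Finset.range ((m+n+1)+1), tt m (n+1) k
      = ∑ k ∈ Finset.range ((m+n+1)+1), tt (n+1) m k :=
    Finset.sum_congr rfl (fun k _ => tt_symm m (n+1) k)
  have e2 : ∑ k ∈ Finset.range (m+n+1), QQ n m k
      = ∑ k ∈ Finset.range (m+n+1), QQ m n k :=
    Finset.sum_congr rfl (fun k _ => QQ_symm n m k)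
  have e3 : cd n * cd m = cd m * cd n := mul_comm _ _
  omega

lemma cd_sum (n : ℕ) : ∀ m, cd (m + n) = ∑ k ∈ Finset.range (m + n + 1), tt m n k := by
  induction n with
  | zero =>
    intro m
    rw [Finset.sum_eq_single 0 (fun k _ hk => by
        unfold tt
        rw [Nat.choose_eq_zero_of_lt (Nat.pos_of_ne_zero hk)]
        ring)
      (fun h => absurd (Finset.mem_range.mpr (by omega)) h)]
    unfold tt
    simp [cd_zero]
  | succ n ih =>
    intro m
    have h1 : m + (n+1) = (m+1) + n := by omega
    rw [h1, ih (m+1)]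
    have h2 : (m+1) + n = m + n + 1 := by omega
    rw [h2]
    exact key m n

/-- The convolution identity
`cd (m+n) = ∑_{k ≥ 0} k! * C(m,k) * C(n,k) * cd (m-k) * cd (n-k)`; since the binomial
coefficients vanish for `k > min m n`, the sum is over `0 ≤ k ≤ min m n`. -/
theorem cd_convolution (m n : ℕ) :
    cd (m + n) =
      ∑ k ∈ Finset.range (min m n + 1),
        k.factorial * Nat.choose m k * Nat.choose n k * cd (m - k) * cd (n - k) := by
  rw [cd_sum n m,
    show (∑ k ∈ Finset.range (min m n + 1),
        k.factorial * Nat.choose m k * Nat.choose n k * cd (m - k) * cd (n - k))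
      = ∑ k ∈ Finset.range (min m n + 1), tt m n k from rfl]
  refine (Finset.sum_subset (Finset.range_subset_range.mpr (by omega)) fun k hk hnk => ?_).symm
  simp only [Finset.mem_range] at hk hnk
  unfold tt
  have : m < k ∨ n < k := by omega
  rcases this with h | h
  · rw [Nat.choose_eq_zero_of_lt h]; ring
  · rw [Nat.choose_eq_zero_of_lt h]; ring
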